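/- There is a constant c > 0, depending only on the dimension d, such that for every Borel set Λ ⊂ R^d and every decreasing kernel f: Cap_f(Λ) ≤ c^{−1}·[ Σ_{n≥0} (f(2^{−n}) − f(2^{1−n}))·N_n(Λ)^{−1} ]^{−1}, where N_n(Λ) is the number of dyadic cubes in D_n that intersect Λ. -/

import Mathlib

open MeasureTheory ProbabilityTheory Filter Set Asymptotics
open scoped ENNReal NNReal Topology InnerProductSpace

noncomputable section

/-- A decreasing kernel function `f : [0,∞) → [0,∞]` (encoded on all of `ℝ`), normalized
so that `f(0) = lim_{r ↓ 0} f(r)` whenever this limit is finite (in `ℝ≥0∞` the limit always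
exists by monotonicity, and the condition is equivalent to `f` being right-continuous at `0`). -/
def IsKernel (f : ℝ → ℝ≥0∞) : Prop :=
  AntitoneOn f (Set.Ici 0) ∧ Filter.Tendsto f (𝓝[>] (0:ℝ)) (𝓝 (f 0))

/-- The `f`-energy of a measure: `E_f(ν) = ∫∫ f(|x−y|) dν(x) dν(y)`. -/
def energy {X : Type*} [MeasurableSpace X] [PseudoMetricSpace X]
    (f : ℝ → ℝ≥0∞) (ν : Measure X) : ℝ≥0∞ :=
  ∫⁻ x, ∫⁻ y, f (dist x y) ∂ν ∂ν

/-- The `f`-capacity of a set: `Cap_f(Λ) = [inf_{ν(Λ)=1} E_f(ν)]⁻¹`, the infimum running over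
Borel probability measures giving full mass to `Λ`. -/
def capacity {X : Type*} [MeasurableSpace X] [PseudoMetricSpace X]
    (f : ℝ → ℝ≥0∞) (Λ : Set X) : ℝ≥0∞ :=
  (⨅ (ν : Measure X) (_ : IsProbabilityMeasure ν) (_ : ν Λ = 1), energy f ν)⁻¹

/-- The dyadic cube of side `2^{-n}` in `ℝ^d` indexed by `j ∈ ℤ^d`. -/
def dyadicCube (d n : ℕ) (j : Fin d → ℤ) : Set (EuclideanSpace ℝ (Fin d)) :=
  {x | ∀ i : Fin d, (j i : ℝ) * 2 ^ (-(n:ℤ)) ≤ x i ∧ x i < ((j i : ℝ) + 1) * 2 ^ (-(n:ℤ))}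

/-- `Σ_{Q ∈ D_n} ν(Q)²`, the sum over all dyadic cubes of side `2^{-n}`. -/
def cubeSum (d n : ℕ) (ν : Measure (EuclideanSpace ℝ (Fin d))) : ℝ≥0∞ :=
  ∑' j : Fin d → ℤ, (ν (dyadicCube d n j)) ^ 2

/-- The number `N_n(Λ)` of dyadic cubes of side `2^{-n}` meeting `Λ` (possibly infinite). -/
def cubeCount (d n : ℕ) (Λ : Set (EuclideanSpace ℝ (Fin d))) : ℕ∞ :=
  {j : Fin d → ℤ | (dyadicCube d n j ∩ Λ).Nonempty}.encard

namespace CapacityProofAux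


lemma tpos (m : ℤ) : (0:ℝ) < 2 ^ m := zpow_pos (by norm_num) m

lemma mem_cube_iff {d n : ℕ} {j : Fin d → ℤ} {x : EuclideanSpace ℝ (Fin d)} :
    x ∈ dyadicCube d n j ↔ ∀ i, ⌊x i * 2 ^ (n:ℤ)⌋ = j i := by
  simp only [dyadicCube, Set.mem_setOf_eq]
  refine forall_congr' fun i => ?_
  have ht : (0:ℝ) < 2 ^ ((n:ℤ)) := tpos _
  rw [Int.floor_eq_iff, zpow_neg, ← div_eq_mul_inv, ← div_eq_mul_inv,
    div_le_iff₀ ht, lt_div_iff₀ ht]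

lemma measurableSet_cube {d n : ℕ} {j : Fin d → ℤ} : MeasurableSet (dyadicCube d n j) := by
  have h : dyadicCube d n j = ⋂ i : Fin d, (fun x : EuclideanSpace ℝ (Fin d) => x i) ⁻¹'
      (Set.Ico ((j i : ℝ) * 2 ^ (-(n:ℤ))) (((j i : ℝ) + 1) * 2 ^ (-(n:ℤ)))) := by
    ext x; simp [dyadicCube, Set.mem_Ico]
  rw [h]
  exact MeasurableSet.iInter fun i =>
    (by fun_prop : Measurable fun x : EuclideanSpace ℝ (Fin d) => x i) measurableSet_Ico

lemma dist_le_of_mem_cube {d m : ℕ} {j : Fin d → ℤ} {x y : EuclideanSpace ℝ (Fin d)}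
    (hx : x ∈ dyadicCube d m j) (hy : y ∈ dyadicCube d m j) :
    dist x y ≤ Real.sqrt d * 2 ^ (-(m:ℤ)) := by
  rw [EuclideanSpace.dist_eq]
  have hb : ∀ i, dist (x i) (y i) ^ 2 ≤ ((2:ℝ) ^ (-(m:ℤ)))^2 := by
    intro i
    obtain ⟨hx1, hx2⟩ := hx i
    obtain ⟨hy1, hy2⟩ := hy i
    rw [Real.dist_eq]
    have habs : |x i - y i| ≤ 2 ^ (-(m:ℤ)) := by
      rw [abs_le]; constructor <;> nlinarith
    have h0 := abs_nonneg (x i - y i)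
    nlinarith
  calc Real.sqrt (∑ i, dist (x i) (y i) ^ 2)
      ≤ Real.sqrt (∑ _i : Fin d, ((2:ℝ) ^ (-(m:ℤ)))^2) :=
        Real.sqrt_le_sqrt (Finset.sum_le_sum fun i _ => hb i)
    _ = Real.sqrt ((d:ℝ) * ((2:ℝ) ^ (-(m:ℤ)))^2) := by
        rw [Finset.sum_const, Finset.card_univ, Fintype.card_fin, nsmul_eq_mul]
    _ = Real.sqrt d * 2 ^ (-(m:ℤ)) := by
        rw [Real.sqrt_mul (by positivity), Real.sqrt_sq (le_of_lt (tpos _))]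

lemma tsum_lintegral_le {X : Type*} [MeasurableSpace X] {μ : Measure X}
    {ι : Type*} (g : ι → X → ℝ≥0∞) :
    ∑' i, ∫⁻ x, g i x ∂μ ≤ ∫⁻ x, ∑' i, g i x ∂μ := by
  classical
  rw [ENNReal.tsum_eq_iSup_sum]
  refine iSup_le fun s => ?_
  have h1 : ∑ i ∈ s, ∫⁻ x, g i x ∂μ ≤ ∫⁻ x, ∑ i ∈ s, g i x ∂μ := by
    induction s using Finset.induction with
    | empty => simp
    | insert _ _ hnot ih =>
        rw [Finset.sum_insert hnot]
        simp_rw [Finset.sum_insert hnot]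
        exact le_trans (add_le_add_right ih _) (le_lintegral_add _ _)
  exact h1.trans (lintegral_mono fun x => ENNReal.sum_le_tsum s)





lemma kernel_tsum_le {f : ℝ → ℝ≥0∞} (hf : AntitoneOn f (Set.Ici 0)) {r : ℝ} (hr : 0 ≤ r) :
    ∑' n : ℕ, (f ((2:ℝ) ^ (-(n:ℤ))) - f ((2:ℝ) ^ (1-(n:ℤ)))) *
      (if r ≤ 2 ^ (-(n:ℤ)) then 1 else 0) ≤ f r := by
  rw [ENNReal.tsum_eq_iSup_nat]
  refine iSup_le fun N => ?_
  have key : ∀ N : ℕ, ∑ n ∈ Finset.range N, (f ((2:ℝ) ^ (-(n:ℤ))) - f ((2:ℝ) ^ (1-(n:ℤ)))) *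
      (if r ≤ 2 ^ (-(n:ℤ)) then 1 else 0) ≤ f (max r ((2:ℝ) ^ (1-(N:ℤ)))) := by
    intro N
    induction N with
    | zero => simp
    | succ N ih =>
      rw [Finset.sum_range_succ]
      have hexp : (1 : ℤ) - ((N+1 : ℕ) : ℤ) = -(N:ℤ) := by push_cast; ring
      rw [hexp]
      have hmono : (2:ℝ) ^ (-(N:ℤ)) ≤ (2:ℝ) ^ (1-(N:ℤ)) := by
        apply zpow_le_zpow_right₀ (by norm_num) (by omega)
      by_cases hc : r ≤ (2:ℝ) ^ (-(N:ℤ))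
      · rw [if_pos hc, mul_one]
        rw [max_eq_right hc, max_eq_right (hc.trans hmono)] at *
        have hle : f ((2:ℝ) ^ (1-(N:ℤ))) ≤ f ((2:ℝ) ^ (-(N:ℤ))) :=
          hf (le_of_lt (tpos _)) (le_of_lt (tpos _)) hmono
        calc _ ≤ f ((2:ℝ) ^ (1-(N:ℤ))) + (f ((2:ℝ) ^ (-(N:ℤ))) - f ((2:ℝ) ^ (1-(N:ℤ)))) :=
              add_le_add_left ih _
          _ = f ((2:ℝ) ^ (-(N:ℤ))) := add_tsub_cancel_of_le hle
      · rw [if_neg hc, mul_zero, add_zero]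
        refine ih.trans (hf ?_ ?_ ?_)
        · exact le_max_of_le_right (le_of_lt (tpos _))
        · exact le_max_of_le_right (le_of_lt (tpos _))
        · exact max_le_max le_rfl hmono
  exact (key N).trans (hf hr (le_max_of_le_right (le_of_lt (tpos _))) (le_max_left _ _))





lemma cubeSum_le_lintegral {d m : ℕ} (ν : Measure (EuclideanSpace ℝ (Fin d))) {r : ℝ}
    (hr : Real.sqrt d * 2 ^ (-(m:ℤ)) ≤ r) :
    cubeSum d m ν ≤ ∫⁻ x, ν (Metric.closedBall x r) ∂ν := by
  have step1 : cubeSum d m ν =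
      ∑' j : Fin d → ℤ, ∫⁻ x, (dyadicCube d m j).indicator
        (fun _ => ν (dyadicCube d m j)) x ∂ν := by
    refine tsum_congr fun j => ?_
    rw [lintegral_indicator_const measurableSet_cube, sq]
  rw [step1]
  refine (tsum_lintegral_le _).trans (lintegral_mono fun x => ?_)
  set j₀ : Fin d → ℤ := fun i => ⌊x i * 2 ^ ((m:ℕ):ℤ)⌋ with hj₀
  have hx0 : x ∈ dyadicCube d m j₀ := mem_cube_iff.mpr fun i => rfl
  have hsingle : ∀ j : Fin d → ℤ, j ≠ j₀ →
      (dyadicCube d m j).indicator (fun _ => ν (dyadicCube d m j)) x = 0 := by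
    intro j hj
    rw [Set.indicator_of_notMem]
    intro hxj
    exact hj (funext fun i => (mem_cube_iff.mp hxj i).symm ▸ rfl)
  rw [tsum_eq_single j₀ hsingle, Set.indicator_of_mem hx0]
  refine measure_mono fun y hy => ?_
  exact Metric.mem_closedBall.mpr (le_trans (dist_le_of_mem_cube hy hx0) hr)

lemma inv_le_cubeSum {d m : ℕ} {Λ : Set (EuclideanSpace ℝ (Fin d))}
    {ν : Measure (EuclideanSpace ℝ (Fin d))} (hν : ν Λ = 1) :
    (2 * (cubeCount d m Λ : ℝ≥0∞))⁻¹ ≤ cubeSum d m ν := by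
  set J := {j : Fin d → ℤ | (dyadicCube d m j ∩ Λ).Nonempty} with hJ
  by_cases hfin : J.Finite
  · set t := hfin.toFinset with ht
    set a : (Fin d → ℤ) → ℝ≥0∞ := fun j => ν (dyadicCube d m j) with ha
    have hcover : Λ ⊆ ⋃ j ∈ t, dyadicCube d m j := by
      intro x hx
      have hmem : (fun i => ⌊x i * 2 ^ ((m:ℕ):ℤ)⌋) ∈ J :=
        ⟨x, mem_cube_iff.mpr fun i => rfl, hx⟩
      exact Set.mem_biUnion (hfin.mem_toFinset.mpr hmem) (mem_cube_iff.mpr fun i => rfl)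
    have h1 : (1:ℝ≥0∞) ≤ ∑ j ∈ t, a j := by
      calc (1:ℝ≥0∞) = ν Λ := hν.symm
        _ ≤ ν (⋃ j ∈ t, dyadicCube d m j) := measure_mono hcover
        _ ≤ ∑ j ∈ t, a j := measure_biUnion_finset_le t _
    have hCS : (1:ℝ≥0∞) ≤ (2 * t.card) * ∑ j ∈ t, (a j)^2 := by
      have hsq : (1:ℝ≥0∞) ≤ (∑ j ∈ t, a j) * (∑ j ∈ t, a j) := by
        calc (1:ℝ≥0∞) = 1 * 1 := (one_mul 1).symm
          _ ≤ _ := mul_le_mul' h1 h1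
      refine hsq.trans ?_
      rw [Finset.sum_mul_sum]
      calc ∑ j ∈ t, ∑ i ∈ t, a j * a i ≤ ∑ j ∈ t, ∑ i ∈ t, ((a j)^2 + (a i)^2) := by
            refine Finset.sum_le_sum fun j _ => Finset.sum_le_sum fun i _ => ?_
            rcases le_total (a j) (a i) with h | h
            · calc a j * a i ≤ a i * a i := mul_le_mul_left h _
                _ = (a i)^2 := (sq (a i)).symm
                _ ≤ _ := le_add_self
            · calc a j * a i ≤ a j * a j := mul_le_mul_right h _
                _ = (a j)^2 := (sq (a j)).symm
                _ ≤ _ := self_le_add_right _ _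
        _ = (2 * t.card) * ∑ j ∈ t, (a j)^2 := by
            simp_rw [Finset.sum_add_distrib, Finset.sum_const, nsmul_eq_mul]
            rw [← Finset.mul_sum]
            ring
    have hcc : (cubeCount d m Λ : ℝ≥0∞) = (t.card : ℝ≥0∞) := by
      rw [cubeCount, ← hJ, hfin.encard_eq_coe_toFinset_card, ← ht]
      simp
    rw [hcc]
    have hTle : ∑ j ∈ t, (a j)^2 ≤ cubeSum d m ν := ENNReal.sum_le_tsum t
    have hcard0 : t.card ≠ 0 := by
      intro h0
      rw [Finset.card_eq_zero] at h0
      rw [h0, Finset.sum_empty] at h1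
      simp at h1
    have hC0 : (2 * (t.card : ℝ≥0∞)) ≠ 0 := by
      simp [hcard0]
    have hCtop : (2 * (t.card : ℝ≥0∞)) ≠ ⊤ := by
      simp [ENNReal.mul_ne_top, ENNReal.natCast_ne_top]
    calc (2 * (t.card : ℝ≥0∞))⁻¹ = (2 * (t.card : ℝ≥0∞))⁻¹ * 1 := (mul_one _).symm
      _ ≤ (2 * (t.card : ℝ≥0∞))⁻¹ * ((2 * t.card) * ∑ j ∈ t, (a j)^2) :=
          mul_le_mul_right hCS _
      _ = ∑ j ∈ t, (a j)^2 := by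
          rw [← mul_assoc, ENNReal.inv_mul_cancel hC0 hCtop, one_mul]
      _ ≤ cubeSum d m ν := hTle
  · have : cubeCount d m Λ = ⊤ := by
      rw [cubeCount, ← hJ, Set.Infinite.encard_eq hfin]
    rw [this]
    simp





/-- floor-division compatibility -/
lemma floor_scale {k n : ℕ} (y : ℝ) :
    ⌊y * 2 ^ ((n+k : ℕ):ℤ)⌋ / (2^k : ℤ) = ⌊y * 2 ^ ((n:ℕ):ℤ)⌋ := by
  set a : ℤ := ⌊y * 2 ^ ((n:ℕ):ℤ)⌋ with hadef
  set b : ℤ := ⌊y * 2 ^ ((n+k : ℕ):ℤ)⌋ with hbdef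
  have hP : (0:ℝ) < (2:ℝ)^(k:ℕ) := by positivity
  have hsplit : y * 2 ^ ((n+k : ℕ):ℤ) = (y * 2 ^ ((n:ℕ):ℤ)) * 2^(k:ℕ) := by
    rw [zpow_natCast, zpow_natCast, pow_add]; ring
  have ha1 : (a:ℝ) ≤ y * 2 ^ ((n:ℕ):ℤ) := Int.floor_le _
  have ha2 : y * 2 ^ ((n:ℕ):ℤ) < a + 1 := Int.lt_floor_add_one _
  have hb1 : (a * 2^k : ℤ) ≤ b := by
    rw [hbdef]
    apply Int.le_floor.mpr
    rw [hsplit]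
    push_cast
    exact mul_le_mul_of_nonneg_right ha1 (le_of_lt hP)
  have hb2 : b < (a + 1) * 2^k := by
    rw [hbdef]
    apply Int.floor_lt.mpr
    rw [hsplit]
    push_cast
    exact mul_lt_mul_of_pos_right ha2 hP
  have hk0 : (2^k : ℤ) ≠ 0 := by positivity
  have hrepr : b = (b - a * 2^k) + 2^k * a := by ring
  rw [hrepr, Int.add_mul_ediv_left _ _ hk0,
    Int.ediv_eq_zero_of_lt (by omega) (by nlinarith), zero_add]

lemma encard_biUnion_le {α ι : Type*} (t : Finset ι) (g : ι → Set α) :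
    (⋃ i ∈ t, g i).encard ≤ ∑ i ∈ t, (g i).encard := by
  classical
  induction t using Finset.induction with
  | empty => simp
  | insert _ _ hnot ih =>
      rw [Finset.sum_insert hnot, Finset.set_biUnion_insert]
      exact (Set.encard_union_le _ _).trans (add_le_add_right ih _)

lemma cubeCount_le {d n k : ℕ} (Λ : Set (EuclideanSpace ℝ (Fin d))) :
    cubeCount d (n+k) Λ ≤ cubeCount d n Λ * 2^(d*k) := by
  classical
  set J' := {j : Fin d → ℤ | (dyadicCube d (n+k) j ∩ Λ).Nonempty} with hJ'
  set J := {j : Fin d → ℤ | (dyadicCube d n j ∩ Λ).Nonempty} with hJ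
  set ψ : (Fin d → ℤ) → (Fin d → ℤ) := fun j' i => j' i / 2^k with hψ
  by_cases hfin : J.Finite
  · set t := hfin.toFinset with ht
    -- each element of J' lies in some fiber over J
    have hsub : J' ⊆ ⋃ j ∈ t, ψ ⁻¹' {j} := by
      rintro j' ⟨x, hxc, hxΛ⟩
      have hj'eq : ∀ i, j' i = ⌊x i * 2 ^ ((n+k:ℕ):ℤ)⌋ := fun i => (mem_cube_iff.mp hxc i).symm
      have hmemJ : ψ j' ∈ J := by
        refine ⟨x, mem_cube_iff.mpr fun i => ?_, hxΛ⟩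
        rw [hψ]
        simp only
        rw [hj'eq i, floor_scale]
      exact Set.mem_biUnion (hfin.mem_toFinset.mpr hmemJ) rfl
    -- each fiber has at most 2^(d*k) elements
    have hfiber : ∀ j : Fin d → ℤ, (ψ ⁻¹' {j}).encard ≤ (2^(d*k) : ℕ∞) := by
      intro j
      have h2k : (0:ℤ) < 2^k := by positivity
      set ρ : (Fin d → ℤ) → (Fin d → Fin (2^k)) := fun j' i =>
        ⟨(j' i % 2^k).toNat, by
          have h1 : 0 ≤ j' i % 2^k := Int.emod_nonneg _ (by positivity)
          have h2 : j' i % 2^k < 2^k := Int.emod_lt_of_pos _ h2k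
          have hcast : ((2^k : ℕ) : ℤ) = 2^k := by push_cast; rfl
          omega⟩ with hρ
      have hinj : Set.InjOn ρ (ψ ⁻¹' {j}) := by
        intro a haf b hbf hab
        have haψ : ψ a = j := haf
        have hbψ : ψ b = j := hbf
        funext i
        have hra : (((a i % 2^k).toNat : ℤ)) = a i % 2^k :=
          Int.toNat_of_nonneg (Int.emod_nonneg _ (by positivity))
        have hrb : (((b i % 2^k).toNat : ℤ)) = b i % 2^k :=
          Int.toNat_of_nonneg (Int.emod_nonneg _ (by positivity))
        have hvalnat : (a i % 2^k).toNat = (b i % 2^k).toNat :=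
          congrArg Fin.val (congrFun hab i)
        have hmod : a i % 2^k = b i % 2^k := by
          rw [← hra, ← hrb]; exact_mod_cast hvalnat
        have h3 : a i / 2^k = j i := congrFun haψ i
        have h4 : b i / 2^k = j i := congrFun hbψ i
        have hdiv : a i / 2^k = b i / 2^k := h3.trans h4.symm
        calc a i = 2^k * (a i / 2^k) + a i % 2^k := (Int.mul_ediv_add_emod _ _).symm
          _ = 2^k * (b i / 2^k) + b i % 2^k := by rw [hdiv, hmod]
          _ = b i := Int.mul_ediv_add_emod _ _
      calc (ψ ⁻¹' {j}).encard = (ρ '' (ψ ⁻¹' {j})).encard := (hinj.encard_image).symm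
        _ ≤ (Set.univ : Set (Fin d → Fin (2^k))).encard := Set.encard_le_encard (Set.subset_univ _)
        _ = ((2^(d*k) : ℕ) : ℕ∞) := by
            rw [Set.encard_univ, ENat.card_eq_coe_fintype_card]
            congr 1
            rw [Fintype.card_fun]
            simp [← pow_mul, mul_comm]
        _ = (2^(d*k) : ℕ∞) := by push_cast; rfl
    calc cubeCount d (n+k) Λ = J'.encard := rfl
      _ ≤ (⋃ j ∈ t, ψ ⁻¹' {j}).encard := Set.encard_le_encard hsub
      _ ≤ ∑ j ∈ t, (ψ ⁻¹' {j}).encard := encard_biUnion_le t _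
      _ ≤ ∑ _j ∈ t, (2^(d*k) : ℕ∞) := Finset.sum_le_sum fun j _ => hfiber j
      _ = (t.card : ℕ∞) * 2^(d*k) := by rw [Finset.sum_const, nsmul_eq_mul]
      _ = cubeCount d n Λ * 2^(d*k) := by
          rw [cubeCount, ← hJ, hfin.encard_eq_coe_toFinset_card, ← ht]
  · have hJtop : cubeCount d n Λ = ⊤ := by
      rw [cubeCount, ← hJ, Set.Infinite.encard_eq hfin]
    rw [hJtop, ENat.top_mul (by positivity)]
    exact le_top





lemma sqrt_bound (d : ℕ) (hd : 1 ≤ d) (n : ℕ) :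
    Real.sqrt d * 2 ^ (-((n+d:ℕ):ℤ)) ≤ (2:ℝ) ^ (-(n:ℤ)) := by
  have hdle : (d:ℝ) ≤ 2^(d:ℕ) := by exact_mod_cast (Nat.lt_two_pow_self (n := d)).le
  have hone : (1:ℝ) ≤ 2^(d:ℕ) := one_le_pow₀ one_le_two
  have h1 : Real.sqrt d ≤ (2:ℝ)^(d:ℕ) :=
    Real.sqrt_le_iff.mpr ⟨by positivity, by nlinarith⟩
  have h2 : ((2:ℝ)^(d:ℕ)) * 2 ^ (-((n+d:ℕ):ℤ)) = 2 ^ (-(n:ℤ)) := by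
    rw [← zpow_natCast (2:ℝ) d, ← zpow_add₀ (two_ne_zero : (2:ℝ) ≠ 0)]
    congr 1
    push_cast
    ring
  calc Real.sqrt d * 2 ^ (-((n+d:ℕ):ℤ)) ≤ (2:ℝ)^(d:ℕ) * 2 ^ (-((n+d:ℕ):ℤ)) :=
        mul_le_mul_of_nonneg_right h1 (le_of_lt (tpos _))
    _ = _ := h2

lemma tsum_le_energy {d : ℕ} (hd : 1 ≤ d) {f : ℝ → ℝ≥0∞} (hf : AntitoneOn f (Set.Ici 0))
    (ν : Measure (EuclideanSpace ℝ (Fin d))) :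
    ∑' n : ℕ, (f ((2:ℝ) ^ (-(n:ℤ))) - f ((2:ℝ) ^ (1-(n:ℤ)))) * cubeSum d (n+d) ν
      ≤ energy f ν := by
  set Δ : ℕ → ℝ≥0∞ := fun n => f ((2:ℝ) ^ (-(n:ℤ))) - f ((2:ℝ) ^ (1-(n:ℤ))) with hΔ
  have step1 : ∀ x : EuclideanSpace ℝ (Fin d),
      ∑' n : ℕ, Δ n * ν (Metric.closedBall x ((2:ℝ) ^ (-(n:ℤ)))) ≤ ∫⁻ y, f (dist x y) ∂ν := by
    intro x
    have heq : ∀ n : ℕ, Δ n * ν (Metric.closedBall x ((2:ℝ) ^ (-(n:ℤ)))) =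
        ∫⁻ y, (Metric.closedBall x ((2:ℝ) ^ (-(n:ℤ)))).indicator (fun _ => Δ n) y ∂ν :=
      fun n => (lintegral_indicator_const measurableSet_closedBall _).symm
    calc ∑' n : ℕ, Δ n * ν (Metric.closedBall x ((2:ℝ) ^ (-(n:ℤ))))
        = ∑' n : ℕ, ∫⁻ y, (Metric.closedBall x ((2:ℝ) ^ (-(n:ℤ)))).indicator
            (fun _ => Δ n) y ∂ν := tsum_congr heq
      _ ≤ ∫⁻ y, ∑' n : ℕ, (Metric.closedBall x ((2:ℝ) ^ (-(n:ℤ)))).indicator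
            (fun _ => Δ n) y ∂ν := tsum_lintegral_le _
      _ ≤ ∫⁻ y, f (dist x y) ∂ν := by
          refine lintegral_mono fun y => ?_
          have hpt : ∀ n : ℕ, (Metric.closedBall x ((2:ℝ) ^ (-(n:ℤ)))).indicator
              (fun _ => Δ n) y = Δ n * (if dist x y ≤ 2 ^ (-(n:ℤ)) then 1 else 0) := by
            intro n
            classical
            rw [Set.indicator_apply]
            by_cases hdy : y ∈ Metric.closedBall x ((2:ℝ) ^ (-(n:ℤ)))
            · rw [if_pos hdy, if_pos (by rwa [Metric.mem_closedBall, dist_comm] at hdy), mul_one]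
            · rw [if_neg hdy, if_neg (by rwa [Metric.mem_closedBall, dist_comm] at hdy), mul_zero]
          rw [tsum_congr hpt]
          exact kernel_tsum_le hf dist_nonneg
  calc ∑' n : ℕ, Δ n * cubeSum d (n+d) ν
      ≤ ∑' n : ℕ, Δ n * ∫⁻ x, ν (Metric.closedBall x ((2:ℝ) ^ (-(n:ℤ)))) ∂ν :=
        ENNReal.tsum_le_tsum fun n =>
          mul_le_mul_right (cubeSum_le_lintegral ν (sqrt_bound d hd n)) _
    _ ≤ ∑' n : ℕ, ∫⁻ x, Δ n * ν (Metric.closedBall x ((2:ℝ) ^ (-(n:ℤ)))) ∂ν :=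
        ENNReal.tsum_le_tsum fun n => lintegral_const_mul_le _ _
    _ ≤ ∫⁻ x, ∑' n : ℕ, Δ n * ν (Metric.closedBall x ((2:ℝ) ^ (-(n:ℤ)))) ∂ν :=
        tsum_lintegral_le _
    _ ≤ energy f ν := lintegral_mono fun x => step1 x


end CapacityProofAux

open CapacityProofAux in
/-- **General upper bound on capacity via counting dyadic cubes**: there is a constant
`c = c(d) > 0` such that for every Borel `Λ ⊆ ℝ^d` and decreasing kernel `f`,
`Cap_f(Λ) ≤ c⁻¹·[Σ_n (f(2^{−n}) − f(2^{1−n}))·N_n(Λ)⁻¹]⁻¹`. -/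
theorem capacity_le_of_cubeCount (d : ℕ) (hd : 1 ≤ d) :
    ∃ c : ℝ≥0, 0 < c ∧
      ∀ (Λ : Set (EuclideanSpace ℝ (Fin d))), MeasurableSet Λ →
      ∀ f : ℝ → ℝ≥0∞, IsKernel f →
        capacity f Λ ≤ (c : ℝ≥0∞)⁻¹ *
          (∑' n : ℕ, (f ((2:ℝ) ^ (-(n:ℤ))) - f ((2:ℝ) ^ (1-(n:ℤ)))) *
            ((cubeCount d n Λ : ℝ≥0∞))⁻¹)⁻¹ := by

  refine ⟨((2:ℝ≥0) ^ (d*d+1))⁻¹, by positivity, fun Λ hΛ f hf => ?_⟩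
  set M := d*d+1 with hM
  have hcoe : ((((2:ℝ≥0) ^ M)⁻¹ : ℝ≥0) : ℝ≥0∞)⁻¹ = (2:ℝ≥0∞)^M := by
    rw [ENNReal.coe_inv (by positivity), inv_inv, ENNReal.coe_pow]
    norm_num
  rw [hcoe, capacity]
  set S := ∑' n : ℕ, (f ((2:ℝ) ^ (-(n:ℤ))) - f ((2:ℝ) ^ (1-(n:ℤ)))) *
      ((cubeCount d n Λ : ℝ≥0∞))⁻¹ with hS
  have h2M0 : ((2:ℝ≥0∞)^M) ≠ 0 := by positivity
  have h2Mtop : ((2:ℝ≥0∞)^M) ≠ ⊤ := by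
    exact ENNReal.pow_ne_top (by norm_num)
  have key : ((2:ℝ≥0∞)^M)⁻¹ * S ≤
      ⨅ (ν : Measure (EuclideanSpace ℝ (Fin d))) (_ : IsProbabilityMeasure ν)
        (_ : ν Λ = 1), energy f ν := by
    refine le_iInf fun ν => le_iInf fun hp => le_iInf fun hm => ?_
    rw [hS, ← ENNReal.tsum_mul_left]
    refine le_trans (ENNReal.tsum_le_tsum fun n => ?_) (tsum_le_energy hd hf.1 ν)
    refine le_trans (le_of_eq (mul_left_comm _ _ _)) (mul_le_mul_right ?_ _)
    refine le_trans ?_ (inv_le_cubeSum (m := n+d) hm)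
    have hD : (cubeCount d (n+d) Λ : ℝ≥0∞) ≤ (cubeCount d n Λ : ℝ≥0∞) * 2^(d*d) := by
      calc (cubeCount d (n+d) Λ : ℝ≥0∞)
          ≤ ((cubeCount d n Λ * 2^(d*d) : ℕ∞) : ℝ≥0∞) :=
            ENat.toENNReal_le.mpr (cubeCount_le Λ)
        _ = (cubeCount d n Λ : ℝ≥0∞) * (((2:ℕ∞)^(d*d) : ℕ∞) : ℝ≥0∞) := ENat.toENNReal_mul _ _
        _ = (cubeCount d n Λ : ℝ≥0∞) * 2^(d*d) := by
            congr 1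
            have : ((2:ℕ∞)^(d*d)) = (((2^(d*d) : ℕ) : ℕ∞)) := by push_cast; rfl
            rw [this, ENat.toENNReal_coe]
            push_cast
            rfl
    have hD' : (2:ℝ≥0∞) * (cubeCount d (n+d) Λ : ℝ≥0∞) ≤
        (2:ℝ≥0∞)^M * (cubeCount d n Λ : ℝ≥0∞) := by
      calc (2:ℝ≥0∞) * (cubeCount d (n+d) Λ : ℝ≥0∞)
          ≤ 2 * ((cubeCount d n Λ : ℝ≥0∞) * 2^(d*d)) := mul_le_mul_right hD 2
        _ = (2:ℝ≥0∞)^M * (cubeCount d n Λ : ℝ≥0∞) := by rw [hM, pow_succ]; ring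
    refine le_trans (le_of_eq (ENNReal.mul_inv (Or.inl h2M0) (Or.inl h2Mtop)).symm) ?_
    exact ENNReal.inv_le_inv.mpr hD'
  calc (⨅ (ν : Measure (EuclideanSpace ℝ (Fin d))) (_ : IsProbabilityMeasure ν)
        (_ : ν Λ = 1), energy f ν)⁻¹
      ≤ (((2:ℝ≥0∞)^M)⁻¹ * S)⁻¹ := ENNReal.inv_le_inv.mpr key
    _ = ((2:ℝ≥0∞)^M) * S⁻¹ := by
        rw [ENNReal.mul_inv (Or.inl (by simpa using h2M0)) (Or.inl (by simpa using ENNReal.inv_ne_top.mpr h2M0)), inv_inv]
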